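/- arXiv:2112.12075 — 2 statements merged into one kernel-verified Lean document; each statement's English description precedes it below -/
import Mathlib

section
/- Let x, y, z, t ∈ ℂ with |yt| < 1. Then the series ∑_{n=0}^∞ F_n(x,y,z;q) (−1)^n q^{C(n,2)} t^n/(q;q)_n converges absolutely and its sum equals (xt;q)_∞ (zt;q)_∞ / (yt;q)_∞. -/
noncomputable section

/-- The q-shifted factorial `(a;q)_n`. -/
def qPoch (q a : ℂ) (n : ℕ) : ℂ := ∏ j ∈ Finset.range n, (1 - a * q ^ j)

/-- The infinite q-shifted factorial `(a;q)_∞`. -/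
def qPochInf (q a : ℂ) : ℂ := ∏' j : ℕ, (1 - a * q ^ j)

/-- The q-binomial coefficient `[n k]_q`. -/
def qBinom (q : ℂ) (n k : ℕ) : ℂ := qPoch q q n / (qPoch q q k * qPoch q q (n - k))

/-- The Cauchy polynomials `p_n(x,y)`. -/
def cauchyP (q x y : ℂ) (n : ℕ) : ℂ := ∏ j ∈ Finset.range n, (x - q ^ j * y)

/-- The generalized q-binomial coefficient `[α k]_{-q}`. -/
def genQBinom (q α : ℂ) (k : ℕ) : ℂ :=
  qPoch q (-(q ^ (-α))) k / qPoch q (-q) k * q ^ (α * (k : ℂ) - (k.choose 2 : ℂ))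

/-- The generalized q-polynomials `L̃_n^{(r,s)}(α,x,y,z,a)`. -/
def Ltil (q : ℂ) (r s : ℤ) (α x y z a : ℂ) (n : ℕ) : ℂ :=
  ∑ k ∈ Finset.range (n + 1),
    qBinom q n k * genQBinom q α k *
      q ^ (r * (k.choose 2 : ℤ) - s * ((k + 1).choose 2 : ℤ) + (k.choose 2 : ℤ)) *
      qPoch q a k * cauchyP q x y (n - k) * z ^ k

/-- The basic hypergeometric series `₂Φ₁[a,b;c;q;z]`. -/
def Phi21 (q a b c z : ℂ) : ℂ :=
  ∑' n : ℕ, qPoch q a n * qPoch q b n / (qPoch q c n * qPoch q q n) * z ^ n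

/-- The basic hypergeometric series `₄Φ₃`. -/
def Phi43 (q a₁ a₂ a₃ a₄ b₁ b₂ b₃ z : ℂ) : ℂ :=
  ∑' n : ℕ, qPoch q a₁ n * qPoch q a₂ n * qPoch q a₃ n * qPoch q a₄ n /
    (qPoch q b₁ n * qPoch q b₂ n * qPoch q b₃ n * qPoch q q n) * z ^ n

/-- The trivariate q-polynomials `F_n(x,y,z;q)`. -/
def Ftri (q x y z : ℂ) (n : ℕ) : ℂ :=
  (-1) ^ n * q ^ (-(n.choose 2 : ℤ)) *
    ∑ k ∈ Finset.range (n + 1),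
      qBinom q n k * q ^ (k.choose 2) * (-z) ^ k * cauchyP q y x (n - k)

/-- The Hahn (Al-Salam–Carlitz) polynomials `φ_n^{(σ)}(x|q)`. -/
def hahnPhi (q σ x : ℂ) (n : ℕ) : ℂ :=
  ∑ k ∈ Finset.range (n + 1), qBinom q n k * qPoch q σ k * x ^ k

/-- The q-derivative operator `D_a`. -/
def Dq (q : ℂ) (f : ℂ → ℂ) : ℂ → ℂ := fun a => (f a - f (q * a)) / a

/-- The homogeneous q-difference operator `D_{xy}`. -/
def Dxy (q : ℂ) (f : ℂ → ℂ → ℂ) : ℂ → ℂ → ℂ :=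
  fun x y => (f x (y / q) - f (q * x) y) / (x - y / q)


section Aux

open Filter Finset Topology

variable {q : ℂ}

lemma qPoch_succ (a : ℂ) (n : ℕ) : qPoch q a (n + 1) = qPoch q a n * (1 - a * q ^ n) :=
  Finset.prod_range_succ _ _

lemma qfactor_ne (hq1 : ‖q‖ < 1) (j : ℕ) : (1 : ℂ) - q * q ^ j ≠ 0 := by
  intro h
  have h1 : ‖q‖ ^ (j + 1) < 1 := pow_lt_one₀ (norm_nonneg q) hq1 (Nat.succ_ne_zero j)
  have h2 : q * q ^ j = 1 := (sub_eq_zero.mp h).symm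
  have h3 : ‖q * q ^ j‖ = 1 := by rw [h2, norm_one]
  rw [norm_mul, norm_pow, ← pow_succ'] at h3
  exact absurd h3 (ne_of_lt h1)

lemma qfac_ne (hq1 : ‖q‖ < 1) (n : ℕ) : qPoch q q n ≠ 0 :=
  Finset.prod_ne_zero_iff.2 fun j _ => qfactor_ne hq1 j

lemma log_summable (hq1 : ‖q‖ < 1) (a : ℂ) :
    Summable fun n : ℕ => Complex.log (1 - a * q ^ n) := by
  apply Summable.of_norm_bounded_eventually_nat (g := fun n => 3 / 2 * (‖a‖ * ‖q‖ ^ n))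
  · exact ((summable_geometric_of_lt_one (norm_nonneg q) hq1).mul_left ‖a‖).mul_left (3 / 2)
  · have h0 : Tendsto (fun n : ℕ => ‖a‖ * ‖q‖ ^ n) atTop (𝓝 (‖a‖ * 0)) :=
      (tendsto_pow_atTop_nhds_zero_of_lt_one (norm_nonneg q) hq1).const_mul ‖a‖
    rw [mul_zero] at h0
    filter_upwards [h0.eventually_le_const (by norm_num : (0 : ℝ) < 1 / 2)] with n hn
    have hz : ‖-(a * q ^ n)‖ ≤ 1 / 2 := by
      rw [norm_neg, norm_mul, norm_pow]; exact hn
    have := Complex.norm_log_one_add_half_le_self hz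
    rw [norm_neg, norm_mul, norm_pow] at this
    simpa [sub_eq_add_neg] using this

lemma hasProd_qp (hq1 : ‖q‖ < 1) (a : ℂ) :
    HasProd (fun j : ℕ => 1 - a * q ^ j) (qPochInf q a) := by
  by_cases h : ∀ j : ℕ, 1 - a * q ^ j ≠ 0
  · exact (Complex.hasProd_of_hasSum_log (f := fun n => 1 - a * q ^ n)
      (fun n => h n) (log_summable hq1 a).hasSum).multipliable.hasProd
  · push_neg at h
    obtain ⟨j, hj⟩ := h
    have h0 : HasProd (fun j : ℕ => 1 - a * q ^ j) 0 := by
      rw [HasProd]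
      apply Tendsto.congr' _ tendsto_const_nhds
      filter_upwards [Filter.eventually_ge_atTop ({j} : Finset ℕ)] with s hs
      exact (Finset.prod_eq_zero (hs (Finset.mem_singleton_self j)) hj).symm
    have he : qPochInf q a = 0 := h0.tprod_eq
    rw [he]; exact h0

lemma tendsto_qPoch (hq1 : ‖q‖ < 1) (a : ℂ) :
    Tendsto (fun n => qPoch q a n) atTop (𝓝 (qPochInf q a)) :=
  (hasProd_qp hq1 a).tendsto_prod_nat

lemma qq_ne (hq1 : ‖q‖ < 1) : qPochInf q q ≠ 0 := by
  have h := Complex.cexp_tsum_eq_tprod (f := fun n => 1 - q * q ^ n)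
    (fun n => qfactor_ne hq1 n) (log_summable hq1 q)
  rw [show qPochInf q q = ∏' n : ℕ, (1 - q * q ^ n) from rfl, ← h]
  exact Complex.exp_ne_zero _

lemma qfac_lb (hq1 : ‖q‖ < 1) : ∃ c : ℝ, 0 < c ∧ ∀ n, c ≤ ‖qPoch q q n‖ := by
  have hL : 0 < ‖qPochInf q q‖ := norm_pos_iff.mpr (qq_ne hq1)
  have ht : Tendsto (fun n => ‖qPoch q q n‖) atTop (𝓝 ‖qPochInf q q‖) :=
    (tendsto_qPoch hq1 q).norm
  have hev : ∀ᶠ n in atTop, ‖qPochInf q q‖ / 2 ≤ ‖qPoch q q n‖ :=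
    ht.eventually_const_le (by linarith)
  obtain ⟨N, hN⟩ := eventually_atTop.mp hev
  refine ⟨min (‖qPochInf q q‖ / 2)
      ((Finset.range (N + 1)).inf' (Finset.nonempty_range_iff.mpr (Nat.succ_ne_zero N)) fun n => ‖qPoch q q n‖), ?_, ?_⟩
  · apply lt_min (by positivity)
    rw [Finset.lt_inf'_iff]
    exact fun i _ => norm_pos_iff.mpr (qfac_ne hq1 i)
  · intro n
    rcases le_or_gt N n with h | h
    · exact le_trans (min_le_left _ _) (hN n h)
    · exact le_trans (min_le_right _ _)
        (Finset.inf'_le _ (Finset.mem_range.mpr (by omega)))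

lemma summable_main (hq1 : ‖q‖ < 1) (x y t : ℂ) (hyt : ‖y * t‖ < 1) :
    Summable fun m : ℕ => ‖cauchyP q y x m * t ^ m / qPoch q q m‖ := by
  obtain ⟨c, hc, hcb⟩ := qfac_lb hq1
  set r : ℝ := (1 + ‖y * t‖) / 2 with hr
  have hytn : 0 ≤ ‖y * t‖ := norm_nonneg _
  have hr0 : 0 < r := by rw [hr]; linarith
  have hr1 : r < 1 := by rw [hr]; linarith
  have hyr : ‖y * t‖ < r := by rw [hr]; linarith
  have hcj : Tendsto (fun j : ℕ => (‖y‖ + ‖q‖ ^ j * ‖x‖) * ‖t‖) atTop (𝓝 ‖y * t‖) := by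
    have h1 : Tendsto (fun j : ℕ => ‖q‖ ^ j) atTop (𝓝 0) :=
      tendsto_pow_atTop_nhds_zero_of_lt_one (norm_nonneg q) hq1
    have h2 := ((h1.mul_const ‖x‖).const_add ‖y‖).mul_const ‖t‖
    simpa [norm_mul] using h2
  obtain ⟨j0, hj0⟩ := eventually_atTop.mp (hcj.eventually_le_const hyr)
  set d : ℕ → ℝ := fun j => max ((‖y‖ + ‖q‖ ^ j * ‖x‖) * ‖t‖) r with hd
  have hdr : ∀ j, r ≤ d j := fun j => le_max_right _ _
  have hd1 : ∀ j, 1 ≤ d j / r := fun j => (one_le_div hr0).mpr (hdr j)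
  have hD0 : 0 < ∏ j ∈ Finset.range j0, (d j / r) :=
    Finset.prod_pos fun j _ => lt_of_lt_of_le one_pos (hd1 j)
  have hDub : ∀ m, (∏ j ∈ Finset.range m, (d j / r)) ≤ ∏ j ∈ Finset.range j0, (d j / r) := by
    intro m
    rcases le_total m j0 with h | h
    · have hsplit := Finset.prod_range_mul_prod_Ico (fun j => d j / r) h
      have hone : (1 : ℝ) ≤ ∏ j ∈ Finset.Ico m j0, (d j / r) := by
        calc (1 : ℝ) = ∏ _j ∈ Finset.Ico m j0, (1 : ℝ) := by simp
          _ ≤ ∏ j ∈ Finset.Ico m j0, (d j / r) :=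
            Finset.prod_le_prod (by simp) fun j _ => hd1 j
      calc ∏ j ∈ Finset.range m, (d j / r)
          ≤ (∏ j ∈ Finset.range m, (d j / r)) * ∏ j ∈ Finset.Ico m j0, (d j / r) :=
            le_mul_of_one_le_right (Finset.prod_nonneg fun j _ => by positivity) hone
        _ = ∏ j ∈ Finset.range j0, (d j / r) := hsplit
    · refine le_of_eq (Finset.prod_subset (Finset.range_subset_range.mpr h) fun i _ hi => ?_).symm
      have hij : j0 ≤ i := by simpa using hi
      have : d i = r := max_eq_right (hj0 i hij)
      rw [this, div_self hr0.ne']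
  have hbound : ∀ m, ‖cauchyP q y x m * t ^ m / qPoch q q m‖ ≤ (∏ j ∈ Finset.range j0, (d j / r)) / c * r ^ m := by
    intro m
    rw [norm_div, norm_mul, norm_pow]
    have h1 : ‖cauchyP q y x m‖ * ‖t‖ ^ m ≤ (∏ j ∈ Finset.range j0, (d j / r)) * r ^ m := by
      have e1 : ‖cauchyP q y x m‖ * ‖t‖ ^ m
          = ∏ j ∈ Finset.range m, (‖y - q ^ j * x‖ * ‖t‖) := by
        rw [cauchyP, norm_prod, Finset.prod_mul_distrib, Finset.prod_const, Finset.card_range]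
      rw [e1]
      calc ∏ j ∈ Finset.range m, (‖y - q ^ j * x‖ * ‖t‖)
          ≤ ∏ j ∈ Finset.range m, d j := by
            apply Finset.prod_le_prod (fun j _ => by positivity)
            intro j _
            refine le_trans (mul_le_mul_of_nonneg_right ?_ (norm_nonneg t)) (le_max_left _ _)
            calc ‖y - q ^ j * x‖ ≤ ‖y‖ + ‖q ^ j * x‖ := norm_sub_le _ _
              _ = ‖y‖ + ‖q‖ ^ j * ‖x‖ := by rw [norm_mul, norm_pow]
        _ = ∏ j ∈ Finset.range m, (d j / r * r) :=
            Finset.prod_congr rfl fun j _ => (div_mul_cancel₀ (d j) hr0.ne').symm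
        _ = (∏ j ∈ Finset.range m, (d j / r)) * r ^ m := by
            rw [Finset.prod_mul_distrib, Finset.prod_const, Finset.card_range]
        _ ≤ (∏ j ∈ Finset.range j0, (d j / r)) * r ^ m := mul_le_mul_of_nonneg_right (hDub m) (by positivity)
    calc ‖cauchyP q y x m‖ * ‖t‖ ^ m / ‖qPoch q q m‖
        ≤ (∏ j ∈ Finset.range j0, (d j / r)) * r ^ m / c := by
          apply div_le_div₀ (by positivity) h1 hc (hcb m)
      _ = (∏ j ∈ Finset.range j0, (d j / r)) / c * r ^ m := by ring
  apply Summable.of_nonneg_of_le (fun m => norm_nonneg _) hbound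
  exact ((summable_geometric_of_lt_one hr0.le hr1).mul_left _)

lemma norm_smul_lt_one (hq1 : ‖q‖ < 1) {y t : ℂ} (hyt : ‖y * t‖ < 1) (N : ℕ) :
    ‖y * (q ^ N * t)‖ < 1 := by
  have hqN : ‖(q : ℂ) ^ N‖ ≤ 1 := by
    rw [norm_pow]; exact pow_le_one₀ (norm_nonneg q) hq1.le
  rw [show y * (q ^ N * t) = q ^ N * (y * t) by ring, norm_mul]
  calc ‖(q : ℂ) ^ N‖ * ‖y * t‖ ≤ 1 * ‖y * t‖ :=
        mul_le_mul_of_nonneg_right hqN (norm_nonneg _)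
    _ < 1 := by rwa [one_mul]

lemma funEq (hq1 : ‖q‖ < 1) (x y t : ℂ) (hyt : ‖y * t‖ < 1) :
    (1 - y * t) * ∑' m : ℕ, cauchyP q y x m * t ^ m / qPoch q q m =
    (1 - x * t) * ∑' m : ℕ, cauchyP q y x m * (q * t) ^ m / qPoch q q m := by
  have hyt' : ‖y * (q * t)‖ < 1 := by
    have := norm_smul_lt_one hq1 hyt 1
    simpa using this
  set u : ℕ → ℂ := fun m => cauchyP q y x m * t ^ m / qPoch q q m with hu
  set w : ℕ → ℂ := fun m => cauchyP q y x m * (q * t) ^ m / qPoch q q m with hw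
  have hut : Summable u := (summable_main hq1 x y t hyt).of_norm
  have hwt : Summable w := (summable_main hq1 x y (q * t) hyt').of_norm
  have hstep : ∀ m : ℕ, u (m + 1) - w (m + 1) = y * t * u m - x * t * w m := by
    intro m
    have hQ := qfac_ne hq1 m
    have hQ1 : (1 : ℂ) - q * q ^ m ≠ 0 := qfactor_ne hq1 m
    rw [hu, hw]
    simp only
    rw [show cauchyP q y x (m + 1) = cauchyP q y x m * (y - q ^ m * x) from
        Finset.prod_range_succ _ _,
      qPoch_succ, pow_succ t m, pow_succ (q * t) m]
    field_simp
    linear_combination (cauchyP q y x m * t * t ^ m * (y - q ^ m * x)) * mul_inv_cancel₀ hQ1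
  have h0 : u 0 - w 0 = 0 := by simp [hu, hw, cauchyP, qPoch]
  have hsum : ∑' m : ℕ, (u m - w m) = y * t * (∑' m, u m) - x * t * (∑' m, w m) := by
    rw [Summable.tsum_eq_zero_add (hut.sub hwt), h0, zero_add]
    calc (∑' m : ℕ, (u (m + 1) - w (m + 1)))
        = ∑' m : ℕ, (y * t * u m - x * t * w m) := tsum_congr fun m => hstep m
      _ = y * t * (∑' m, u m) - x * t * (∑' m, w m) := by
          rw [Summable.tsum_sub (hut.mul_left _) (hwt.mul_left _), tsum_mul_left, tsum_mul_left]
  have h2 : (∑' m, u m) - (∑' m, w m) = ∑' m : ℕ, (u m - w m) := (Summable.tsum_sub hut hwt).symm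
  linear_combination h2.trans hsum

lemma iterEq (hq1 : ‖q‖ < 1) (x y t : ℂ) (hyt : ‖y * t‖ < 1) (N : ℕ) :
    (∑' m : ℕ, cauchyP q y x m * t ^ m / qPoch q q m) * qPoch q (y * t) N =
    (∑' m : ℕ, cauchyP q y x m * (q ^ N * t) ^ m / qPoch q q m) * qPoch q (x * t) N := by
  induction N with
  | zero => simp only [pow_zero, one_mul, qPoch, Finset.range_zero, Finset.prod_empty, mul_one]
  | succ N ih =>
    have hfe := funEq hq1 x y (q ^ N * t) (norm_smul_lt_one hq1 hyt N)
    have e1 : q * (q ^ N * t) = q ^ (N + 1) * t := by ring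
    rw [e1] at hfe
    rw [qPoch_succ, qPoch_succ]
    linear_combination (1 - y * t * q ^ N) * ih + qPoch q (x * t) N * hfe

set_option maxHeartbeats 1000000 in
lemma tendsto_S_one (hq1 : ‖q‖ < 1) (x y t : ℂ) (hyt : ‖y * t‖ < 1) :
    Tendsto (fun N : ℕ => ∑' m : ℕ, cauchyP q y x m * (q ^ N * t) ^ m / qPoch q q m)
      atTop (𝓝 1) := by
  have hgs : Summable (fun m : ℕ => ‖cauchyP q y x m * t ^ m / qPoch q q m‖) :=
    summable_main hq1 x y t hyt
  have hbound : ∀ N : ℕ,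
      ‖(∑' m : ℕ, cauchyP q y x m * (q ^ N * t) ^ m / qPoch q q m) - 1‖
        ≤ ‖q‖ ^ N * ∑' m : ℕ, ‖cauchyP q y x m * t ^ m / qPoch q q m‖ := by
    intro N
    have hsN : Summable fun m : ℕ => ‖cauchyP q y x m * (q ^ N * t) ^ m / qPoch q q m‖ :=
      summable_main hq1 x y (q ^ N * t) (norm_smul_lt_one hq1 hyt N)
    have h0 : cauchyP q y x 0 * (q ^ N * t) ^ 0 / qPoch q q 0 = 1 := by
      simp [cauchyP, qPoch]
    rw [Summable.tsum_eq_zero_add hsN.of_norm, h0, add_sub_cancel_left]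
    have hs1 : Summable fun m : ℕ =>
        ‖cauchyP q y x (m + 1) * (q ^ N * t) ^ (m + 1) / qPoch q q (m + 1)‖ :=
      (summable_nat_add_iff
        (f := fun m : ℕ => ‖cauchyP q y x m * (q ^ N * t) ^ m / qPoch q q m‖) 1).mpr hsN
    refine le_trans (norm_tsum_le_tsum_norm hs1) ?_
    have hgs1 : Summable fun m : ℕ => ‖cauchyP q y x (m + 1) * t ^ (m + 1) / qPoch q q (m + 1)‖ :=
      (summable_nat_add_iff
        (f := fun m : ℕ => ‖cauchyP q y x m * t ^ m / qPoch q q m‖) 1).mpr hgs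
    have hterm : ∀ m : ℕ,
        ‖cauchyP q y x (m + 1) * (q ^ N * t) ^ (m + 1) / qPoch q q (m + 1)‖
          ≤ ‖q‖ ^ N * ‖cauchyP q y x (m + 1) * t ^ (m + 1) / qPoch q q (m + 1)‖ := by
      intro m
      have e : cauchyP q y x (m + 1) * (q ^ N * t) ^ (m + 1) / qPoch q q (m + 1)
          = (q ^ N) ^ (m + 1) * (cauchyP q y x (m + 1) * t ^ (m + 1) / qPoch q q (m + 1)) := by
        rw [mul_pow]; ring
      rw [e, norm_mul]
      have h : ‖((q : ℂ) ^ N) ^ (m + 1)‖ ≤ ‖q‖ ^ N := by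
        rw [norm_pow, norm_pow]
        calc (‖q‖ ^ N) ^ (m + 1) ≤ (‖q‖ ^ N) ^ 1 :=
              pow_le_pow_of_le_one (by positivity)
                (pow_le_one₀ (norm_nonneg q) hq1.le) (by omega)
          _ = ‖q‖ ^ N := pow_one _
      exact mul_le_mul_of_nonneg_right h (norm_nonneg _)
    refine le_trans (Summable.tsum_le_tsum hterm hs1 (hgs1.mul_left _)) ?_
    rw [tsum_mul_left]
    apply mul_le_mul_of_nonneg_left ?_ (by positivity)
    have htot := Summable.tsum_eq_zero_add hgs
    have hg0 : 0 ≤ ‖cauchyP q y x 0 * t ^ 0 / qPoch q q 0‖ := norm_nonneg _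
    linarith
  have hto : Tendsto
      (fun N : ℕ => ‖q‖ ^ N * ∑' m : ℕ, ‖cauchyP q y x m * t ^ m / qPoch q q m‖)
      atTop (𝓝 0) := by
    have h5 := (tendsto_pow_atTop_nhds_zero_of_lt_one (norm_nonneg q) hq1).mul_const
      (∑' m : ℕ, ‖cauchyP q y x m * t ^ m / qPoch q q m‖)
    rw [zero_mul] at h5
    exact h5
  rw [tendsto_iff_norm_sub_tendsto_zero]
  exact squeeze_zero (fun N => norm_nonneg _) hbound hto

lemma keyEq (hq1 : ‖q‖ < 1) (x y t : ℂ) (hyt : ‖y * t‖ < 1) :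
    (∑' m : ℕ, cauchyP q y x m * t ^ m / qPoch q q m) * qPochInf q (y * t)
      = qPochInf q (x * t) := by
  have h1 : Tendsto
      (fun N => (∑' m : ℕ, cauchyP q y x m * t ^ m / qPoch q q m) * qPoch q (y * t) N)
      atTop (𝓝 ((∑' m : ℕ, cauchyP q y x m * t ^ m / qPoch q q m) * qPochInf q (y * t))) :=
    (tendsto_qPoch hq1 (y * t)).const_mul _
  have h2 : Tendsto
      (fun N => (∑' m : ℕ, cauchyP q y x m * (q ^ N * t) ^ m / qPoch q q m)
          * qPoch q (x * t) N)
      atTop (𝓝 (1 * qPochInf q (x * t))) :=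
    (tendsto_S_one hq1 x y t hyt).mul (tendsto_qPoch hq1 (x * t))
  rw [one_mul] at h2
  exact tendsto_nhds_unique (h1.congr fun N => iterEq hq1 x y t hyt N) h2

lemma qpinf_ne (hq1 : ‖q‖ < 1) (w : ℂ) (hw : ‖w‖ < 1) : qPochInf q w ≠ 0 := by
  have h := keyEq hq1 0 w 1 (by simpa using hw)
  simp only [mul_one] at h
  have h0 : qPochInf q (0 : ℂ) = 1 := by simp [qPochInf]
  rw [h0] at h
  intro hzero
  rw [hzero, mul_zero] at h
  exact one_ne_zero h.symm

lemma cauchyP_zero_left (z : ℂ) (k : ℕ) :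
    cauchyP q 0 z k = (-z) ^ k * q ^ (k.choose 2) := by
  induction k with
  | zero => simp [cauchyP]
  | succ k ih =>
    rw [cauchyP, Finset.prod_range_succ, ← cauchyP, ih, Nat.choose_succ_succ,
      Nat.choose_one_right, pow_add]
    ring

end Aux

/-- Generating function for the trivariate q-polynomials. -/
theorem stmt3 (q : ℂ) (hq0 : q ≠ 0) (hq1 : ‖q‖ < 1) (x y z t : ℂ) (hyt : ‖y * t‖ < 1) :
    Summable (fun n : ℕ =>
        ‖Ftri q x y z n * (-1) ^ n * q ^ (n.choose 2) * t ^ n / qPoch q q n‖) ∧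
    ∑' n : ℕ, Ftri q x y z n * (-1) ^ n * q ^ (n.choose 2) * t ^ n / qPoch q q n =
      qPochInf q (x * t) * qPochInf q (z * t) / qPochInf q (y * t) := by
  have h0t : ‖(0 : ℂ) * t‖ < 1 := by simp
  have hA : Summable fun m : ℕ => ‖cauchyP q y x m * t ^ m / qPoch q q m‖ :=
    summable_main hq1 x y t hyt
  have hB : Summable fun m : ℕ => ‖cauchyP q 0 z m * t ^ m / qPoch q q m‖ :=
    summable_main hq1 z 0 t h0t
  have hterm : ∀ n : ℕ, Ftri q x y z n * (-1) ^ n * q ^ (n.choose 2) * t ^ n / qPoch q q n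
      = ∑ k ∈ Finset.range (n + 1),
          (cauchyP q 0 z k * t ^ k / qPoch q q k) *
            (cauchyP q y x (n - k) * t ^ (n - k) / qPoch q q (n - k)) := by
    intro n
    rw [Ftri]
    have e0 : ∀ S : ℂ, (-1 : ℂ) ^ n * q ^ (-(n.choose 2 : ℤ)) * S * (-1) ^ n
        * q ^ (n.choose 2) * t ^ n / qPoch q q n = S * t ^ n / qPoch q q n := by
      intro S
      have h1 : ((-1 : ℂ)) ^ n * (-1) ^ n = 1 := by
        rw [← mul_pow]; norm_num
      have h2 : q ^ (-(n.choose 2 : ℤ)) * q ^ (n.choose 2) = 1 := by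
        rw [← zpow_natCast q (n.choose 2), ← zpow_add₀ hq0]
        simp
      have h3 : (-1 : ℂ) ^ n * q ^ (-(n.choose 2 : ℤ)) * S * (-1) ^ n * q ^ (n.choose 2)
          = ((-1 : ℂ) ^ n * (-1) ^ n) * (q ^ (-(n.choose 2 : ℤ)) * q ^ (n.choose 2)) * S := by
        ring
      rw [h3, h1, h2, one_mul, one_mul]
    rw [e0, Finset.sum_mul, Finset.sum_div]
    refine Finset.sum_congr rfl fun k hk => ?_
    have hkn : k ≤ n := Nat.lt_succ_iff.mp (Finset.mem_range.mp hk)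
    rw [cauchyP_zero_left, qBinom]
    have htn : t ^ k * t ^ (n - k) = t ^ n := by
      rw [← pow_add]; congr 1; omega
    have hQn := qfac_ne hq1 n
    have hQk := qfac_ne hq1 k
    have hQnk := qfac_ne hq1 (n - k)
    rw [← htn]
    field_simp
  constructor
  · have hsum := summable_norm_sum_mul_range_of_summable_norm hB hA
    exact hsum.congr fun n => (congrArg norm (hterm n)).symm
  · have hprod := tsum_mul_tsum_eq_tsum_sum_range_of_summable_norm hB hA
    have hBsum : (∑' k : ℕ, cauchyP q 0 z k * t ^ k / qPoch q q k) = qPochInf q (z * t) := by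
      have h := keyEq hq1 z 0 t h0t
      have h0 : qPochInf q ((0 : ℂ) * t) = 1 := by simp [qPochInf]
      rw [h0, mul_one] at h
      exact h
    have hyne : qPochInf q (y * t) ≠ 0 := qpinf_ne hq1 (y * t) hyt
    have hAsum : (∑' m : ℕ, cauchyP q y x m * t ^ m / qPoch q q m)
        = qPochInf q (x * t) / qPochInf q (y * t) :=
      eq_div_of_mul_eq hyne (keyEq hq1 x y t hyt)
    calc ∑' n : ℕ, Ftri q x y z n * (-1) ^ n * q ^ (n.choose 2) * t ^ n / qPoch q q n
        = ∑' n : ℕ, ∑ k ∈ Finset.range (n + 1),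
            (cauchyP q 0 z k * t ^ k / qPoch q q k) *
              (cauchyP q y x (n - k) * t ^ (n - k) / qPoch q q (n - k)) :=
          tsum_congr hterm
      _ = (∑' k : ℕ, cauchyP q 0 z k * t ^ k / qPoch q q k)
            * ∑' m : ℕ, cauchyP q y x m * t ^ m / qPoch q q m := hprod.symm
      _ = qPochInf q (z * t) * (qPochInf q (x * t) / qPochInf q (y * t)) := by
          rw [hBsum, hAsum]
      _ = qPochInf q (x * t) * qPochInf q (z * t) / qPochInf q (y * t) := by
          ring

end
end

section
/- Let a, s, ω ∈ ℂ with a ≠ 0, let n ∈ ℕ, and assume a ω q^m ≠ 1 for all integers m ≥ 0 and a s q^m ≠ 1 for all 0 ≤ m ≤ n−1. Then the n-th q-derivative with respect to a satisfies D_a^n{ (as;q)_∞/(aω;q)_∞ } = p_n(ω,s) · (as;q)_∞ / ((as;q)_n (aω;q)_∞); equivalently, when ω ≠ 0 the right-hand side equals ω^n ((s/ω;q)_n/(as;q)_n) · (as;q)_∞/(aω;q)_∞. -/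
noncomputable section

/-! ### Auxiliary lemmas -/

lemma my_hasProd_zero_of_eq_zero {f : ℕ → ℂ} (i0 : ℕ) (h : f i0 = 0) : HasProd f 0 := by
  have hev : ∀ᶠ s in Filter.atTop, ∏ i ∈ s, f i = 0 := by
    filter_upwards [Filter.eventually_ge_atTop ({i0} : Finset ℕ)] with s hs
    exact Finset.prod_eq_zero (hs (Finset.mem_singleton_self i0)) h
  exact Filter.Tendsto.congr' (Filter.EventuallyEq.symm hev) tendsto_const_nhds

lemma my_mult (q x : ℂ) (hq1 : ‖q‖ < 1) : Multipliable (fun j : ℕ => 1 - x * q ^ j) := by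
  by_cases hz : ∃ j, 1 - x * q ^ j = 0
  · obtain ⟨j, hj⟩ := hz
    exact ⟨0, my_hasProd_zero_of_eq_zero j hj⟩
  · push_neg at hz
    have := Complex.multipliable_of_summable_log (f := fun n : ℕ => 1 - x * q ^ n) ?_
    · exact this
    have hsum : Summable (fun n : ℕ => (3/2 : ℝ) * (‖x‖ * ‖q‖ ^ n)) :=
      ((summable_geometric_of_lt_one (norm_nonneg q) hq1).mul_left ‖x‖).mul_left _
    apply Summable.of_norm_bounded_eventually_nat hsum
    have hto : Filter.Tendsto (fun n : ℕ => ‖x‖ * ‖q‖ ^ n) Filter.atTop (nhds 0) := by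
      simpa using (tendsto_pow_atTop_nhds_zero_of_lt_one (norm_nonneg q) hq1).const_mul ‖x‖
    filter_upwards [hto.eventually_le_const (by norm_num : (0:ℝ) < 1/2)] with n hn
    have hnorm : ‖-(x * q ^ n)‖ ≤ 1/2 := by
      rw [norm_neg, norm_mul, norm_pow]; exact hn
    have hlog := Complex.norm_log_one_add_half_le_self hnorm
    rw [show (1 : ℂ) + -(x * q ^ n) = 1 - x * q ^ n by ring] at hlog
    calc ‖Complex.log (1 - x * q ^ n)‖ ≤ 3/2 * ‖-(x * q^n)‖ := hlog
      _ = 3/2 * (‖x‖ * ‖q‖^n) := by rw [norm_neg, norm_mul, norm_pow]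

lemma my_qPochInf_rec (q x : ℂ) (hq1 : ‖q‖ < 1) :
    qPochInf q x = (1 - x) * qPochInf q (q * x) := by
  have h0 : (fun j : ℕ => 1 - x * q ^ (j + 1)) = fun j : ℕ => 1 - q * x * q ^ j := by
    funext j; rw [pow_succ']; ring
  have hm' : Multipliable (fun j : ℕ => 1 - x * q ^ (j + 1)) := by
    rw [h0]; exact my_mult q (q * x) hq1
  have key : (∏' j : ℕ, (1 - x * q ^ j)) = (1 - x * q ^ 0) * ∏' j : ℕ, (1 - x * q ^ (j + 1)) :=
    tprod_eq_zero_mul' hm'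
  rw [qPochInf, qPochInf, key, pow_zero, mul_one, h0]

lemma my_qPoch_succ (q x : ℂ) (n : ℕ) : qPoch q x (n+1) = qPoch q x n * (1 - x * q ^ n) :=
  Finset.prod_range_succ _ _

lemma my_qPoch_shift (q x : ℂ) (n : ℕ) : qPoch q x (n+1) = (1 - x) * qPoch q (q*x) n := by
  rw [qPoch, qPoch, Finset.prod_range_succ', pow_zero, mul_one, mul_comm]
  congr 1
  exact Finset.prod_congr rfl fun j _ => by rw [pow_succ']; ring

lemma my_cauchyP_succ (q x y : ℂ) (n : ℕ) :
    cauchyP q x y (n+1) = cauchyP q x y n * (x - q ^ n * y) :=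
  Finset.prod_range_succ _ _

lemma my_alg (C P1' P2' Qn a u v w t : ℂ) (ha : a ≠ 0) (hu : u ≠ 0) (hv : v ≠ 0)
    (hw : w ≠ 0) (hQn : Qn ≠ 0) (hP2' : P2' ≠ 0) (ht : w - v = a * t) :
    (C * (u * P1') / (Qn * (v * P2')) - C * P1' / (Qn * w / u * P2')) / a
      = C * t * (u * P1') / (Qn * w * (v * P2')) := by
  have hd1 : Qn * (v * P2') ≠ 0 := mul_ne_zero hQn (mul_ne_zero hv hP2')
  have hd2 : Qn * w / u * P2' ≠ 0 :=
    mul_ne_zero (div_ne_zero (mul_ne_zero hQn hw) hu) hP2'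
  have hd3 : Qn * w * (v * P2') ≠ 0 := mul_ne_zero (mul_ne_zero hQn hw) (mul_ne_zero hv hP2')
  rw [div_sub_div _ _ hd1 hd2, div_div, div_eq_div_iff (mul_ne_zero (mul_ne_zero hd1 hd2) ha) hd3]
  field_simp
  linear_combination (C * P1') * ht

lemma my_key (q : ℂ) (hq0 : q ≠ 0) (hq1 : ‖q‖ < 1) (s ω : ℂ) :
    ∀ n : ℕ, ∀ a : ℂ, a ≠ 0 → (∀ m : ℕ, a * ω * q ^ m ≠ 1) →
      (∀ m : ℕ, m < n → a * s * q ^ m ≠ 1) →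
    ((Dq q)^[n] (fun b => qPochInf q (b * s) / qPochInf q (b * ω))) a =
      cauchyP q ω s n * qPochInf q (a * s) / (qPoch q (a * s) n * qPochInf q (a * ω)) := by
  intro n
  induction n with
  | zero => intro a _ _ _; simp [cauchyP, qPoch]
  | succ n ih =>
    intro a ha hω hs
    have hω' : ∀ m : ℕ, (q * a) * ω * q ^ m ≠ 1 := fun m => by
      rw [show q * a * ω * q ^ m = a * ω * q ^ (m+1) by rw [pow_succ]; ring]
      exact hω (m+1)
    have hs' : ∀ m : ℕ, m < n → (q * a) * s * q ^ m ≠ 1 := fun m hm => by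
      rw [show q * a * s * q ^ m = a * s * q ^ (m+1) by rw [pow_succ]; ring]
      exact hs (m+1) (Nat.succ_lt_succ hm)
    have IH1 := ih a ha hω (fun m hm => hs m (Nat.lt_succ_of_lt hm))
    have IH2 := ih (q * a) (mul_ne_zero hq0 ha) hω' hs'
    rw [Function.iterate_succ_apply']
    show ((Dq q)^[n] (fun b => qPochInf q (b * s) / qPochInf q (b * ω)) a
        - (Dq q)^[n] (fun b => qPochInf q (b * s) / qPochInf q (b * ω)) (q * a)) / a = _
    rw [IH1, IH2, show q * a * s = q * (a * s) by ring, show q * a * ω = q * (a * ω) by ring]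
    have h1 : qPochInf q (a * s) = (1 - a * s) * qPochInf q (q * (a * s)) :=
      my_qPochInf_rec q (a * s) hq1
    have h2 : qPochInf q (a * ω) = (1 - a * ω) * qPochInf q (q * (a * ω)) :=
      my_qPochInf_rec q (a * ω) hq1
    have e0 : (1 : ℂ) - a * s ≠ 0 := by
      have := hs 0 (Nat.succ_pos n); rw [pow_zero, mul_one] at this
      exact sub_ne_zero.mpr fun h => this h.symm
    have en : (1 : ℂ) - a * s * q ^ n ≠ 0 := by
      exact sub_ne_zero.mpr fun h => hs n (Nat.lt_succ_self n) h.symm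
    have e2 : (1 : ℂ) - a * ω ≠ 0 := by
      have := hω 0; rw [pow_zero, mul_one] at this
      exact sub_ne_zero.mpr fun h => this h.symm
    have hQn : qPoch q (a * s) n ≠ 0 := by
      rw [qPoch]
      refine Finset.prod_ne_zero_iff.mpr fun j hj => sub_ne_zero.mpr fun h => ?_
      exact hs j (Nat.lt_succ_of_lt (Finset.mem_range.mp hj)) h.symm
    have hrel : (1 - a * s) * qPoch q (q * (a * s)) n = qPoch q (a * s) n * (1 - a * s * q ^ n) := by
      rw [← my_qPoch_shift, my_qPoch_succ]
    have hQ'eq : qPoch q (q * (a * s)) n = qPoch q (a * s) n * (1 - a * s * q ^ n) / (1 - a * s) := by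
      rw [eq_div_iff e0, mul_comm _ (1 - a * s), hrel]
    by_cases hP2' : qPochInf q (q * (a * ω)) = 0
    · simp [h2, hP2', my_cauchyP_succ]
    · have hQ' : qPoch q (q * (a * s)) n ≠ 0 := by
        rw [hQ'eq]
        exact div_ne_zero (mul_ne_zero hQn en) e0
      rw [my_cauchyP_succ, my_qPoch_succ, h1, h2, hQ'eq]
      exact my_alg _ _ _ _ _ _ _ _ _ ha e0 e2 en hQn hP2' (by ring)

/-- Action of the iterated q-derivative on `(as;q)_∞/(aω;q)_∞`. -/
theorem stmt4 (q : ℂ) (hq0 : q ≠ 0) (hq1 : ‖q‖ < 1) (a s ω : ℂ) (n : ℕ) (ha : a ≠ 0)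
    (hω : ∀ m : ℕ, a * ω * q ^ m ≠ 1) (hs : ∀ m : ℕ, m < n → a * s * q ^ m ≠ 1) :
    ((Dq q)^[n] (fun b => qPochInf q (b * s) / qPochInf q (b * ω))) a =
      cauchyP q ω s n * qPochInf q (a * s) / (qPoch q (a * s) n * qPochInf q (a * ω)) ∧
    (ω ≠ 0 →
      cauchyP q ω s n * qPochInf q (a * s) / (qPoch q (a * s) n * qPochInf q (a * ω)) =
        ω ^ n * (qPoch q (s / ω) n / qPoch q (a * s) n) *
          (qPochInf q (a * s) / qPochInf q (a * ω))) := by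
  constructor
  · exact my_key q hq0 hq1 s ω n a ha hω hs
  · intro hω0
    have hC : cauchyP q ω s n = ω ^ n * qPoch q (s / ω) n := by
      rw [cauchyP, qPoch,
        show (ω:ℂ)^n = ∏ _j ∈ Finset.range n, ω by rw [Finset.prod_const, Finset.card_range],
        ← Finset.prod_mul_distrib]
      refine Finset.prod_congr rfl fun j _ => ?_
      field_simp
    rw [hC]
    ring

end
end
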